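/- arXiv:1702.08557 — 8 statements merged into one kernel-verified Lean document; each statement's English description precedes it below -/
import Mathlib

section
/- Let (G, M, I) be a finite formal context and let (g, m) ∈ I. Then the density of the OA-bicluster (m′, g′) satisfies (|m′| + |g′| − 1) / (|m′| · |g′|) ≤ ρ(m′, g′) ≤ 1. -/
/-- For a finite formal context `(G, M, I)` and `(g, m) ∈ I`, the density of
the OA-bicluster `(m′, g′)` satisfies `(|m′| + |g′| − 1) / (|m′|·|g′|) ≤ ρ(m′, g′) ≤ 1`. -/
theorem oa_bicluster_density_bounds {G M : Type*} [Fintype G] [Fintype M]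
    [DecidableEq G] [DecidableEq M]
    (I : Finset (G × M)) (g : G) (m : M) (hgm : (g, m) ∈ I)
    (mP : Finset G) (gP : Finset M)
    (hmP : mP = Finset.univ.filter (fun x : G => (x, m) ∈ I))
    (hgP : gP = Finset.univ.filter (fun n : M => (g, n) ∈ I))
    (ρ : ℚ)
    (hρ : ρ = ((I ∩ mP ×ˢ gP).card : ℚ) / ((mP.card : ℚ) * (gP.card : ℚ))) :
    ((mP.card : ℚ) + (gP.card : ℚ) - 1) / ((mP.card : ℚ) * (gP.card : ℚ)) ≤ ρ ∧ ρ ≤ 1 := by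
  have hgmP : g ∈ mP := by simp [hmP, hgm]
  have hmgP : m ∈ gP := by simp [hgP, hgm]
  have ha : 0 < mP.card := Finset.card_pos.mpr ⟨g, hgmP⟩
  have hb : 0 < gP.card := Finset.card_pos.mpr ⟨m, hmgP⟩
  have hden : (0 : ℚ) < (mP.card : ℚ) * (gP.card : ℚ) := by positivity
  have hsub : (mP ×ˢ {m}) ∪ ({g} ×ˢ gP) ⊆ I ∩ mP ×ˢ gP := by
    intro p hp
    rcases Finset.mem_union.mp hp with hp | hp
    · rcases Finset.mem_product.mp hp with ⟨h1, h2⟩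
      have h2' : p.2 = m := Finset.mem_singleton.mp h2
      have : p.1 ∈ Finset.univ.filter (fun x : G => (x, m) ∈ I) := hmP ▸ h1
      have hpI : (p.1, m) ∈ I := (Finset.mem_filter.mp this).2
      refine Finset.mem_inter.mpr ⟨?_, Finset.mem_product.mpr ⟨h1, h2' ▸ hmgP⟩⟩
      have : p = (p.1, m) := by rw [← h2']
      rw [this]; exact hpI
    · rcases Finset.mem_product.mp hp with ⟨h1, h2⟩
      have h1' : p.1 = g := Finset.mem_singleton.mp h1
      have : p.2 ∈ Finset.univ.filter (fun n : M => (g, n) ∈ I) := hgP ▸ h2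
      have hpI : (g, p.2) ∈ I := (Finset.mem_filter.mp this).2
      refine Finset.mem_inter.mpr ⟨?_, Finset.mem_product.mpr ⟨h1' ▸ hgmP, h2⟩⟩
      have : p = (g, p.2) := by rw [← h1']
      rw [this]; exact hpI
  have hcardu : ((mP ×ˢ {m}) ∪ ({g} ×ˢ gP)).card = mP.card + gP.card - 1 := by
    have hint : (mP ×ˢ {m}) ∩ ({g} ×ˢ gP) = {(g, m)} := by
      ext p
      simp only [Finset.mem_inter, Finset.mem_product, Finset.mem_singleton, Prod.ext_iff]
      constructor
      · rintro ⟨⟨_, h2⟩, ⟨h1, _⟩⟩; exact ⟨h1, h2⟩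
      · rintro ⟨h1, h2⟩; exact ⟨⟨h1 ▸ hgmP, h2⟩, ⟨h1, h2 ▸ hmgP⟩⟩
    have := Finset.card_union_add_card_inter (mP ×ˢ {m}) ({g} ×ˢ gP)
    rw [hint] at this
    simp only [Finset.card_product, Finset.card_singleton, mul_one, one_mul] at this
    omega
  have hlow : mP.card + gP.card - 1 ≤ (I ∩ mP ×ˢ gP).card := by
    rw [← hcardu]; exact Finset.card_le_card hsub
  have hhigh : (I ∩ mP ×ˢ gP).card ≤ mP.card * gP.card := by
    calc (I ∩ mP ×ˢ gP).card ≤ (mP ×ˢ gP).card := Finset.card_le_card Finset.inter_subset_right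
    _ = mP.card * gP.card := Finset.card_product _ _
  have hlowQ : ((mP.card : ℚ) + (gP.card : ℚ) - 1) ≤ ((I ∩ mP ×ˢ gP).card : ℚ) := by
    have h1 : mP.card + gP.card ≤ (I ∩ mP ×ˢ gP).card + 1 := by omega
    have := Nat.cast_le (α := ℚ) |>.mpr h1
    push_cast at this
    linarith
  have hhighQ : ((I ∩ mP ×ˢ gP).card : ℚ) ≤ (mP.card : ℚ) * (gP.card : ℚ) := by
    have := Nat.cast_le (α := ℚ) |>.mpr hhigh
    push_cast at this
    linarith
  constructor
  · rw [hρ]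
    gcongr
  · rw [hρ]
    exact (div_le_one hden).mpr hhighQ
end

section
/- Let (G, M, I) be a finite formal context and let (g, m) ∈ I. The OA-bicluster (m′, g′) is a formal concept, i.e. (m′)′ = g′ and (g′)′ = m′, if and only if its density satisfies ρ(m′, g′) = 1. -/
/-- For a finite formal context `(G, M, I)` and `(g, m) ∈ I`, the OA-bicluster
`(m′, g′)` is a formal concept, i.e. `(m′)′ = g′` and `(g′)′ = m′`, iff `ρ(m′, g′) = 1`. -/
theorem oa_bicluster_concept_iff_density_one {G M : Type*} [Fintype G] [Fintype M]
    [DecidableEq G] [DecidableEq M]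
    (I : Finset (G × M)) (g : G) (m : M) (hgm : (g, m) ∈ I)
    (mP : Finset G) (gP : Finset M)
    (hmP : mP = Finset.univ.filter (fun x : G => (x, m) ∈ I))
    (hgP : gP = Finset.univ.filter (fun n : M => (g, n) ∈ I))
    (ρ : ℚ)
    (hρ : ρ = ((I ∩ mP ×ˢ gP).card : ℚ) / ((mP.card : ℚ) * (gP.card : ℚ))) :
    (Finset.univ.filter (fun n : M => ∀ x ∈ mP, (x, n) ∈ I) = gP ∧
     Finset.univ.filter (fun x : G => ∀ n ∈ gP, (x, n) ∈ I) = mP) ↔ ρ = 1 := by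
  have hg : g ∈ mP := by simp [hmP, hgm]
  have hm : m ∈ gP := by simp [hgP, hgm]
  have hne : (mP.card : ℚ) * (gP.card : ℚ) ≠ 0 := by
    have h1 : 0 < mP.card := Finset.card_pos.mpr ⟨g, hg⟩
    have h2 : 0 < gP.card := Finset.card_pos.mpr ⟨m, hm⟩
    positivity
  have key : ρ = 1 ↔ mP ×ˢ gP ⊆ I := by
    rw [hρ, div_eq_one_iff_eq hne]
    constructor
    · intro h
      have hcard : (I ∩ mP ×ˢ gP).card = (mP ×ˢ gP).card := by
        have : ((I ∩ mP ×ˢ gP).card : ℚ) = ((mP ×ˢ gP).card : ℚ) := by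
          rw [h, Finset.card_product]; push_cast; ring
        exact_mod_cast this
      have heq : I ∩ mP ×ˢ gP = mP ×ˢ gP :=
        Finset.eq_of_subset_of_card_le Finset.inter_subset_right (le_of_eq hcard.symm)
      intro p hp
      have : p ∈ I ∩ mP ×ˢ gP := heq.symm ▸ hp
      exact (Finset.mem_inter.mp this).1
    · intro h
      rw [Finset.inter_eq_right.mpr h, Finset.card_product]
      push_cast; ring
  rw [key]
  constructor
  · rintro ⟨h1, h2⟩ p hp
    obtain ⟨x, n⟩ := p
    rw [Finset.mem_product] at hp
    have hx : x ∈ Finset.univ.filter (fun x : G => ∀ n ∈ gP, (x, n) ∈ I) := h2 ▸ hp.1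
    exact (Finset.mem_filter.mp hx).2 n hp.2
  · intro hsub
    constructor
    · ext n
      simp only [Finset.mem_filter, Finset.mem_univ, true_and]
      constructor
      · intro h; rw [hgP]; simp [h g hg]
      · intro hn x hx; exact hsub (Finset.mem_product.mpr ⟨hx, hn⟩)
    · ext x
      simp only [Finset.mem_filter, Finset.mem_univ, true_and]
      constructor
      · intro h; rw [hmP]; simp [h m hm]
      · intro hx n hn; exact hsub (Finset.mem_product.mpr ⟨hx, hn⟩)
end

section
/- Let (G, M, I) be a formal context and let (A, B) be a formal concept with A ≠ ∅ and B ≠ ∅. Then there exists a pair (g, m) ∈ I such that the OA-bicluster (m′, g′) contains (A, B) component-wise, i.e. A ⊆ m′ and B ⊆ g′. In particular, with minimal density threshold ρ_min = 0 every formal concept with nonempty extent and intent is covered by some OA-bicluster of the bicluster collection. -/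
/-- For a formal context `(G, M, I)` and a formal concept `(A, B)` with
`A ≠ ∅` and `B ≠ ∅`, there exists `(g, m) ∈ I` such that the OA-bicluster `(m′, g′)`
covers `(A, B)` component-wise: `A ⊆ m′` and `B ⊆ g′`. -/
theorem concept_covered_by_oa_bicluster {G M : Type*} (I : Set (G × M))
    (up : Set G → Set M) (dn : Set M → Set G)
    (hup : ∀ A : Set G, up A = {n : M | ∀ x ∈ A, (x, n) ∈ I})
    (hdn : ∀ B : Set M, dn B = {x : G | ∀ n ∈ B, (x, n) ∈ I})
    (A : Set G) (B : Set M) (hconc : up A = B ∧ dn B = A)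
    (hA : A.Nonempty) (hB : B.Nonempty) :
    ∃ g m, (g, m) ∈ I ∧ A ⊆ dn {m} ∧ B ⊆ up {g} := by
  obtain ⟨g, hg⟩ := hA
  obtain ⟨m, hm⟩ := hB
  have hmB : m ∈ up A := hconc.1 ▸ hm
  rw [hup] at hmB
  refine ⟨g, m, hmB g hg, ?_, ?_⟩
  · intro x hx
    rw [hdn]
    intro n hn
    rw [Set.mem_singleton_iff] at hn
    subst hn
    exact hmB x hx
  · intro n hn
    have : n ∈ up A := hconc.1 ▸ hn
    rw [hup] at this
    rw [hup]
    intro x hx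
    rw [Set.mem_singleton_iff] at hx
    subst hx
    exact this x hg
end

section
/- Let K = (G, M, B, Y) be a triadic context, with Y ⊆ G × M × B. For every triadic concept T_c = (X_c, Y_c, Z_c) of K with nonempty X_c, Y_c, Z_c, and for every triple (g, m, b) ∈ X_c × Y_c × Z_c, the prime operator based OAC-tricluster T = ((m, b)′, (g, b)′, (g, m)′) contains T_c component-wise: X_c ⊆ (m, b)′, Y_c ⊆ (g, b)′ and Z_c ⊆ (g, m)′. In particular, for ρ_min = 0, every triadic concept of K with nonempty components is contained in some prime OAC-tricluster of K. -/
/-- Let `(G, M, C, Y)` be a triadic context. For every triadic concept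
`(Xc, Yc, Zc)` with nonempty components, and every `(g, m, b) ∈ Xc × Yc × Zc`, the prime
operator based OAC-tricluster `((m,b)′, (g,b)′, (g,m)′)` contains the concept
component-wise; in particular (for `ρ_min = 0`), every triadic concept of the context
with nonempty components is contained in some prime OAC-tricluster of the context. -/
theorem triconcept_contained_in_prime_tricluster {G M C : Type*} (Y : Set (G × M × C))
    (Xc : Set G) (Yc : Set M) (Zc : Set C)
    (hX : Xc.Nonempty) (hY : Yc.Nonempty) (hZ : Zc.Nonempty)
    (hsub : {p : G × M × C | p.1 ∈ Xc ∧ p.2.1 ∈ Yc ∧ p.2.2 ∈ Zc} ⊆ Y)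
    (hmax : ∀ (X' : Set G) (Y' : Set M) (Z' : Set C), Xc ⊆ X' → Yc ⊆ Y' → Zc ⊆ Z' →
      {p : G × M × C | p.1 ∈ X' ∧ p.2.1 ∈ Y' ∧ p.2.2 ∈ Z'} ⊆ Y →
      X' = Xc ∧ Y' = Yc ∧ Z' = Zc) :
    (∀ g ∈ Xc, ∀ m ∈ Yc, ∀ b ∈ Zc,
      Xc ⊆ {x : G | (x, m, b) ∈ Y} ∧
      Yc ⊆ {y : M | (g, y, b) ∈ Y} ∧
      Zc ⊆ {z : C | (g, m, z) ∈ Y}) ∧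
    (∃ g m b, (g, m, b) ∈ Y ∧
      Xc ⊆ {x : G | (x, m, b) ∈ Y} ∧
      Yc ⊆ {y : M | (g, y, b) ∈ Y} ∧
      Zc ⊆ {z : C | (g, m, z) ∈ Y}) := by
  have key : ∀ g ∈ Xc, ∀ m ∈ Yc, ∀ b ∈ Zc,
      Xc ⊆ {x : G | (x, m, b) ∈ Y} ∧
      Yc ⊆ {y : M | (g, y, b) ∈ Y} ∧
      Zc ⊆ {z : C | (g, m, z) ∈ Y} := by
    intro g hg m hm b hb
    refine ⟨fun x hx => hsub ⟨hx, hm, hb⟩,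
      fun y hy => hsub ⟨hg, hy, hb⟩,
      fun z hz => hsub ⟨hg, hm, hz⟩⟩
  obtain ⟨g, hg⟩ := hX
  obtain ⟨m, hm⟩ := hY
  obtain ⟨b, hb⟩ := hZ
  exact ⟨key, g, m, b, hsub ⟨hg, hm, hb⟩, key g hg m hm b hb⟩
end

section
/- Let (G, M, I) be a finite formal context with |I| > 0 and let (g, m) ∈ I. Then the local bicluster modularity of the OA-bicluster (m′, g′), defined as Mod_l(m′, g′) = (1/(|g′|·|m′|)) · Σ_{(g̃, m̃) ∈ m′ × g′} ( [ (g̃, m̃) ∈ I ] − |g̃′|·|m̃′| / |I| ), satisfies Mod_l(m′, g′) = ρ(m′, g′) − (d̄_G · d̄_M) / |I|, where d̄_G = (Σ_{g̃ ∈ m′} |g̃′|) / |m′| is the average degree of objects in m′ and d̄_M = (Σ_{m̃ ∈ g′} |m̃′|) / |g′| is the average degree of attributes in g′. -/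
/-- For a finite formal context `(G, M, I)` with `|I| > 0` and `(g, m) ∈ I`,
the local bicluster modularity of the OA-bicluster `(m′, g′)` equals
`ρ(m′, g′) − (d̄_G · d̄_M)/|I|`, where `d̄_G` and `d̄_M` are the average degrees of the
objects in `m′` and of the attributes in `g′`, respectively. -/
theorem local_bicluster_modularity {G M : Type*} [Fintype G] [Fintype M]
    [DecidableEq G] [DecidableEq M]
    (I : Finset (G × M)) (hI : 0 < I.card)
    (g : G) (m : M) (hgm : (g, m) ∈ I)
    (mP : Finset G) (gP : Finset M)
    (hmP : mP = Finset.univ.filter (fun x : G => (x, m) ∈ I))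
    (hgP : gP = Finset.univ.filter (fun n : M => (g, n) ∈ I))
    (ρ : ℚ)
    (hρ : ρ = ((I ∩ mP ×ˢ gP).card : ℚ) / ((mP.card : ℚ) * (gP.card : ℚ)))
    (dG dM : ℚ)
    (hdG : dG = (∑ x ∈ mP, ((Finset.univ.filter (fun n : M => (x, n) ∈ I)).card : ℚ)) /
      (mP.card : ℚ))
    (hdM : dM = (∑ n ∈ gP, ((Finset.univ.filter (fun x : G => (x, n) ∈ I)).card : ℚ)) /
      (gP.card : ℚ))
    (Modl : ℚ)
    (hModl : Modl = (1 / ((gP.card : ℚ) * (mP.card : ℚ))) *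
      ∑ p ∈ mP ×ˢ gP,
        ((if (p.1, p.2) ∈ I then (1 : ℚ) else 0) -
          ((Finset.univ.filter (fun n : M => (p.1, n) ∈ I)).card : ℚ) *
            ((Finset.univ.filter (fun x : G => (x, p.2) ∈ I)).card : ℚ) / (I.card : ℚ))) :
    Modl = ρ - dG * dM / (I.card : ℚ) := by
  have hg : g ∈ mP := by simp [hmP, hgm]
  have hm : m ∈ gP := by simp [hgP, hgm]
  have ha : (mP.card : ℚ) ≠ 0 := by
    exact Nat.cast_ne_zero.mpr (Finset.card_ne_zero_of_mem hg)
  have hb : (gP.card : ℚ) ≠ 0 := by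
    exact Nat.cast_ne_zero.mpr (Finset.card_ne_zero_of_mem hm)
  have hIc : (I.card : ℚ) ≠ 0 := by
    exact Nat.cast_ne_zero.mpr hI.ne'
  have h1 : ∑ p ∈ mP ×ˢ gP, (if (p.1, p.2) ∈ I then (1 : ℚ) else 0)
      = ((I ∩ mP ×ˢ gP).card : ℚ) := by
    rw [Finset.sum_boole]
    norm_cast
    rw [Finset.inter_comm]
    congr 1
  have h2 : ∑ p ∈ mP ×ˢ gP,
      (((Finset.univ.filter (fun n : M => (p.1, n) ∈ I)).card : ℚ) *
        ((Finset.univ.filter (fun x : G => (x, p.2) ∈ I)).card : ℚ) / (I.card : ℚ))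
      = (∑ x ∈ mP, ((Finset.univ.filter (fun n : M => (x, n) ∈ I)).card : ℚ)) *
        (∑ n ∈ gP, ((Finset.univ.filter (fun x : G => (x, n) ∈ I)).card : ℚ)) / (I.card : ℚ) := by
    rw [Finset.sum_mul_sum, Finset.sum_product, Finset.sum_div]
    simp_rw [Finset.sum_div]
  rw [hModl, Finset.sum_sub_distrib, h1, h2, hρ, hdG, hdM]
  field_simp
end

section
/- Let (G, M, I) be a finite formal context and let (g, m) ∈ I, with OA-bicluster (m′, g′). Then Σ_{g̃ ∈ m′} |g̃′ ∩ g′| + Σ_{m̃ ∈ g′} |m̃′ ∩ m′| = 2 · |I ∩ (m′ × g′)|. Consequently, the weak-community condition Σ_{g̃ ∈ m′} |g̃′ ∩ g′| + Σ_{m̃ ∈ g′} |m̃′ ∩ m′| ≥ Σ_{g̃ ∈ m′} |g̃′ ∩ (M \ g′)| + Σ_{m̃ ∈ g′} |m̃′ ∩ (G \ m′)| holds if and only if ρ(m′, g′) ≥ cut(m′, g′) / (2 · |g′| · |m′|), where cut(m′, g′) = Σ_{g̃ ∈ m′} |g̃′ ∩ (M \ g′)| + Σ_{m̃ ∈ g′}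 |m̃′ ∩ (G \ m′)|. -/
/-- For a finite formal context `(G, M, I)` and `(g, m) ∈ I` with
OA-bicluster `(m′, g′)`:
`Σ_{g̃ ∈ m′} |g̃′ ∩ g′| + Σ_{m̃ ∈ g′} |m̃′ ∩ m′| = 2·|I ∩ (m′ × g′)|`; consequently the
weak-community condition (internal degree sum at least the cut) holds iff
`ρ(m′, g′) ≥ cut(m′, g′) / (2·|g′|·|m′|)`. -/
theorem weak_community_iff_density_ge_cut {G M : Type*} [Fintype G] [Fintype M]
    [DecidableEq G] [DecidableEq M]
    (I : Finset (G × M)) (g : G) (m : M) (hgm : (g, m) ∈ I)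
    (mP : Finset G) (gP : Finset M)
    (hmP : mP = Finset.univ.filter (fun x : G => (x, m) ∈ I))
    (hgP : gP = Finset.univ.filter (fun n : M => (g, n) ∈ I))
    (ρ : ℚ)
    (hρ : ρ = ((I ∩ mP ×ˢ gP).card : ℚ) / ((mP.card : ℚ) * (gP.card : ℚ)))
    (cut : ℕ)
    (hcut : cut = ∑ x ∈ mP, ((Finset.univ.filter (fun n : M => (x, n) ∈ I)) \ gP).card +
      ∑ n ∈ gP, ((Finset.univ.filter (fun x : G => (x, n) ∈ I)) \ mP).card) :
    (∑ x ∈ mP, ((Finset.univ.filter (fun n : M => (x, n) ∈ I)) ∩ gP).card +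
      ∑ n ∈ gP, ((Finset.univ.filter (fun x : G => (x, n) ∈ I)) ∩ mP).card =
      2 * (I ∩ mP ×ˢ gP).card) ∧
    ((cut ≤ ∑ x ∈ mP, ((Finset.univ.filter (fun n : M => (x, n) ∈ I)) ∩ gP).card +
        ∑ n ∈ gP, ((Finset.univ.filter (fun x : G => (x, n) ∈ I)) ∩ mP).card) ↔
      (cut : ℚ) / (2 * (gP.card : ℚ) * (mP.card : ℚ)) ≤ ρ) := by
  have hE1 : ∑ x ∈ mP, ((Finset.univ.filter (fun n : M => (x, n) ∈ I)) ∩ gP).card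
      = (I ∩ mP ×ˢ gP).card := by
    have : I ∩ mP ×ˢ gP = (mP ×ˢ gP).filter (fun p => p ∈ I) := by
      ext p; simp [Finset.mem_filter, and_comm]
    rw [this, Finset.card_filter, Finset.sum_product]
    refine Finset.sum_congr rfl fun x _ => ?_
    rw [← Finset.card_filter]
    congr 1
    ext n; simp [Finset.mem_filter, and_comm]
  have hE2 : ∑ n ∈ gP, ((Finset.univ.filter (fun x : G => (x, n) ∈ I)) ∩ mP).card
      = (I ∩ mP ×ˢ gP).card := by
    have : I ∩ mP ×ˢ gP = (mP ×ˢ gP).filter (fun p => p ∈ I) := by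
      ext p; simp [Finset.mem_filter, and_comm]
    rw [this, Finset.card_filter, Finset.sum_product, Finset.sum_comm]
    refine Finset.sum_congr rfl fun n _ => ?_
    rw [← Finset.card_filter]
    congr 1
    ext x; simp [Finset.mem_filter, and_comm]
  have hmpos : 0 < mP.card := Finset.card_pos.2 ⟨g, by simp [hmP, hgm]⟩
  have hgpos : 0 < gP.card := Finset.card_pos.2 ⟨m, by simp [hgP, hgm]⟩
  have heq : ∑ x ∈ mP, ((Finset.univ.filter (fun n : M => (x, n) ∈ I)) ∩ gP).card +
      ∑ n ∈ gP, ((Finset.univ.filter (fun x : G => (x, n) ∈ I)) ∩ mP).card =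
      2 * (I ∩ mP ×ˢ gP).card := by rw [hE1, hE2]; ring
  refine ⟨heq, ?_⟩
  rw [heq, hρ]
  set E := (I ∩ mP ×ˢ gP).card
  have hm : (0:ℚ) < (mP.card : ℚ) := by exact_mod_cast hmpos
  have hg : (0:ℚ) < (gP.card : ℚ) := by exact_mod_cast hgpos
  rw [div_le_div_iff₀ (by positivity) (by positivity)]
  constructor
  · intro h
    have h' : (cut : ℚ) ≤ 2 * E := by exact_mod_cast h
    calc (cut:ℚ) * (mP.card * gP.card) ≤ 2 * E * (mP.card * gP.card) :=
          mul_le_mul_of_nonneg_right h' (le_of_lt (mul_pos hm hg))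
      _ = E * (2 * gP.card * mP.card) := by ring
  · intro h
    have h' : (cut : ℚ) * (mP.card * gP.card) ≤ 2 * E * (mP.card * gP.card) := by
      calc (cut:ℚ) * (mP.card * gP.card) ≤ E * (2 * gP.card * mP.card) := h
        _ = 2 * E * (mP.card * gP.card) := by ring
    have h2 : (cut : ℚ) ≤ 2 * E :=
      le_of_mul_le_mul_right h' (mul_pos hm hg)
    exact_mod_cast h2
end

section
/- Let (G, M, I) be a finite formal context and let (g, m) ∈ I. Every set A with g ∈ A ⊆ g′′ satisfies A ⊆ m′ and A′ = g′; hence |{A ⊆ m′ | A′ = g′}| ≥ 2^{|g′′| − 1}, and the stability index of the OA-bicluster (m′, g′) satisfies the lower bound σ(m′, g′) ≥ 2^{|g′′ \ {g}| − |m′|}. -/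
/-- For a finite formal context `(G, M, I)` and `(g, m) ∈ I`: every set `A`
with `g ∈ A ⊆ g′′` satisfies `A ⊆ m′` and `A′ = g′`; hence
`|{A ⊆ m′ | A′ = g′}| ≥ 2^{|g′′| − 1}` and the stability index of the OA-bicluster
`(m′, g′)` satisfies `σ(m′, g′) ≥ 2^{|g′′ \ {g}| − |m′|}`. -/
theorem oa_bicluster_stability_lower_bound {G M : Type*} [Fintype G] [Fintype M]
    [DecidableEq G] [DecidableEq M]
    (I : Finset (G × M)) (g : G) (m : M) (hgm : (g, m) ∈ I)
    (mP : Finset G) (gP : Finset M) (gPP : Finset G)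
    (hmP : mP = Finset.univ.filter (fun x : G => (x, m) ∈ I))
    (hgP : gP = Finset.univ.filter (fun n : M => (g, n) ∈ I))
    (hgPP : gPP = Finset.univ.filter (fun x : G => ∀ n ∈ gP, (x, n) ∈ I))
    (σ : ℚ)
    (hσ : σ = ((mP.powerset.filter
        (fun A : Finset G =>
          Finset.univ.filter (fun n : M => ∀ x ∈ A, (x, n) ∈ I) = gP)).card : ℚ) /
      2 ^ mP.card) :
    (∀ A : Finset G, g ∈ A → A ⊆ gPP →
      A ⊆ mP ∧ Finset.univ.filter (fun n : M => ∀ x ∈ A, (x, n) ∈ I) = gP) ∧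
    2 ^ (gPP.card - 1) ≤ (mP.powerset.filter
        (fun A : Finset G =>
          Finset.univ.filter (fun n : M => ∀ x ∈ A, (x, n) ∈ I) = gP)).card ∧
    (2 : ℚ) ^ (((gPP.erase g).card : ℤ) - (mP.card : ℤ)) ≤ σ := by
  have hm_gP : m ∈ gP := by rw [hgP]; simp [hgm]
  have hg_gPP : g ∈ gPP := by
    rw [hgPP]
    simp only [Finset.mem_filter, Finset.mem_univ, true_and]
    intro n hn
    rw [hgP] at hn
    simpa using hn
  have hsub : gPP ⊆ mP := by
    intro x hx
    rw [hgPP] at hx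
    rw [hmP]
    simp only [Finset.mem_filter, Finset.mem_univ, true_and] at hx ⊢
    exact hx m hm_gP
  have key : ∀ A : Finset G, g ∈ A → A ⊆ gPP →
      A ⊆ mP ∧ Finset.univ.filter (fun n : M => ∀ x ∈ A, (x, n) ∈ I) = gP := by
    intro A hgA hA
    refine ⟨hA.trans hsub, ?_⟩
    ext n
    simp only [Finset.mem_filter, Finset.mem_univ, true_and]
    constructor
    · intro h
      rw [hgP]; simp only [Finset.mem_filter, Finset.mem_univ, true_and]
      exact h g hgA
    · intro hn x hx
      have hx' := hA hx
      rw [hgPP] at hx'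
      simp only [Finset.mem_filter, Finset.mem_univ, true_and] at hx'
      exact hx' n hn
  set S := mP.powerset.filter
      (fun A : Finset G =>
        Finset.univ.filter (fun n : M => ∀ x ∈ A, (x, n) ∈ I) = gP) with hS
  have himg : (gPP.erase g).powerset.image (fun T => insert g T) ⊆ S := by
    intro A hA
    simp only [Finset.mem_image, Finset.mem_powerset] at hA
    obtain ⟨T, hT, rfl⟩ := hA
    have hTsub : insert g T ⊆ gPP := by
      intro x hx
      rcases Finset.mem_insert.mp hx with rfl | hx
      · exact hg_gPP
      · exact (Finset.erase_subset g gPP) (hT hx)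
    obtain ⟨h1, h2⟩ := key (insert g T) (Finset.mem_insert_self g T) hTsub
    rw [hS]
    simp only [Finset.mem_filter, Finset.mem_powerset]
    exact ⟨h1, h2⟩
  have hinj : Set.InjOn (fun T => insert g T) ((gPP.erase g).powerset : Set (Finset G)) := by
    intro a ha b hb hab
    simp only [Finset.coe_powerset, Set.mem_preimage, Set.mem_powerset_iff,
      Finset.coe_subset] at ha hb
    have hga : g ∉ a := fun h => (Finset.mem_erase.mp (ha h)).1 rfl
    have hgb : g ∉ b := fun h => (Finset.mem_erase.mp (hb h)).1 rfl
    have := congrArg (fun s => Finset.erase s g) hab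
    simpa [Finset.erase_insert hga, Finset.erase_insert hgb] using this
  have hcard : 2 ^ (gPP.card - 1) ≤ S.card := by
    calc 2 ^ (gPP.card - 1) = (gPP.erase g).powerset.card := by
          rw [Finset.card_powerset, Finset.card_erase_of_mem hg_gPP]
      _ = ((gPP.erase g).powerset.image (fun T => insert g T)).card := by
          rw [Finset.card_image_of_injOn hinj]
      _ ≤ S.card := Finset.card_le_card himg
  refine ⟨key, hcard, ?_⟩
  rw [hσ]
  have h2 : (0 : ℚ) < 2 ^ mP.card := by positivity
  rw [zpow_sub₀ (by norm_num : (2:ℚ) ≠ 0), div_le_div_iff₀ (by positivity) h2]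
  have hle : ((2 : ℚ) ^ (((gPP.erase g).card : ℤ))) ≤ (S.card : ℚ) := by
    rw [zpow_natCast]
    have : (2 : ℕ) ^ (gPP.erase g).card ≤ S.card := by
      rwa [Finset.card_erase_of_mem hg_gPP]
    exact_mod_cast this
  calc (2 : ℚ) ^ (((gPP.erase g).card : ℤ)) * 2 ^ mP.card
      ≤ (S.card : ℚ) * 2 ^ mP.card := by
        exact mul_le_mul_of_nonneg_right hle (le_of_lt h2)
    _ = (S.card : ℚ) * 2 ^ ((mP.card : ℤ)) := by rw [zpow_natCast]
end

section
/- Let Γ = (V, E) be a simple graph (E symmetric and irreflexive as a relation on V), and form the formal context K = (V, V, Ĩ), where Ĩ is the reflexive closure of E: (u, v) ∈ Ĩ iff u = v or (u, v) ∈ E. Then for every A ⊆ V, the pair (A, A) is a formal concept of K (i.e. A′ = A with respect to Ĩ) if and only if A is a maximal clique of Γ, i.e. every two distinct vertices of A are adjacent in Γ and no proper superset of A has this property. -/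
/-- Let `Γ = (V, E)` be a simple graph (symmetric, irreflexive) and let
`Ĩ` be the reflexive closure of `E`, giving the formal context `(V, V, Ĩ)`. Then for
every `A ⊆ V`, the pair `(A, A)` is a formal concept of that context (i.e. `A′ = A`
w.r.t. `Ĩ`) iff `A` is a maximal clique of `Γ`. -/
theorem concept_iff_maximal_clique {V : Type*} (E : V → V → Prop)
    (hsymm : ∀ u w : V, E u w → E w u) (hirr : ∀ v : V, ¬ E v v)
    (A : Set V) :
    {v : V | ∀ a ∈ A, a = v ∨ E a v} = A ↔
      ((∀ u ∈ A, ∀ w ∈ A, u ≠ w → E u w) ∧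
        ∀ B : Set V, A ⊆ B → (∀ u ∈ B, ∀ w ∈ B, u ≠ w → E u w) → B = A) := by
  constructor
  · intro h
    constructor
    · intro u hu w hw hne
      have hw' : w ∈ {v : V | ∀ a ∈ A, a = v ∨ E a v} := h.symm ▸ hw
      rcases hw' u hu with rfl | he
      · exact absurd rfl hne
      · exact he
    · intro B hAB hB
      apply Set.Subset.antisymm _ hAB
      intro b hb
      rw [← h]
      intro a ha
      by_cases hab : a = b
      · exact Or.inl hab
      · exact Or.inr (hB a (hAB ha) b hb hab)
  · rintro ⟨hcl, hmax⟩
    apply Set.Subset.antisymm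
    · intro v hv
      have hB : ∀ u ∈ A ∪ {v}, ∀ w ∈ A ∪ {v}, u ≠ w → E u w := by
        rintro u (hu | rfl) w (hw | rfl) hne
        · exact hcl u hu w hw hne
        · rcases hv u hu with rfl | he
          · exact absurd rfl hne
          · exact he
        · rcases hv w hw with rfl | he
          · exact absurd rfl hne.symm
          · exact hsymm _ _ he
        · exact absurd rfl hne
      have := hmax (A ∪ {v}) Set.subset_union_left hB
      exact this ▸ Set.mem_union_right A rfl
    · intro a ha a' ha'
      by_cases h : a' = a
      · exact Or.inl h
      · exact Or.inr (hcl a' ha' a ha h)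
end
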